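/- In the controlled system with constant dose u, if 0 < u < r_H/λ then (K(1 − λu/r_H), 0) is an equilibrium, and the Jacobian there has eigenvalues λu − r_H and u(r_C λ − r_H μ)/r_H; both are strictly negative when u > 0, u < r_H/λ, and r_C/r_H < μ/λ. -/

import Mathlib

open Real Filter

theorem controlled_healthy_equilibrium
    (rH rC K γ lam mu u : ℝ)
    (hrH : 0 < rH) (hrC : 0 < rC) (hK : 0 < K) (hγ : 0 < γ)
    (hlam : 0 < lam) (hlam1 : lam ≤ 1) (hmu : 0 < mu) (hmu1 : mu ≤ 1) (hlm : lam < mu)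
    (hu : 0 < u) (hu2 : u < rH / lam)
    (F : ℝ × ℝ → ℝ × ℝ)
    (hF : ∀ p : ℝ × ℝ,
      F p = (rH * (1 - (p.1 + p.2) / K) * p.1 - γ * p.1 * p.2 - lam * u * p.1,
             rC * (1 - (p.1 + p.2) / K) * p.2 - mu * u * p.2)) :
    F (K * (1 - lam * u / rH), 0) = 0 ∧
    HasFDerivAt F
      (((lam * u - rH) • ContinuousLinearMap.fst ℝ ℝ ℝ +
          (-(rH * (K * (1 - lam * u / rH)) / K) - γ * (K * (1 - lam * u / rH))) •
            ContinuousLinearMap.snd ℝ ℝ ℝ).prod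
        ((u * (rC * lam - rH * mu) / rH) • ContinuousLinearMap.snd ℝ ℝ ℝ))
      (K * (1 - lam * u / rH), 0) ∧
    (rC / rH < mu / lam → lam * u - rH < 0 ∧ u * (rC * lam - rH * mu) / rH < 0) := by
  have hK0 : (K:ℝ) ≠ 0 := ne_of_gt hK
  have hrH0 : (rH:ℝ) ≠ 0 := ne_of_gt hrH
  have hFeq : F = fun p : ℝ × ℝ =>
      (rH * (1 - (p.1 + p.2) / K) * p.1 - γ * p.1 * p.2 - lam * u * p.1,
       rC * (1 - (p.1 + p.2) / K) * p.2 - mu * u * p.2) := funext hF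
  refine ⟨?_, ?_, ?_⟩
  · rw [hF]
    simp only [Prod.mk_eq_zero]
    constructor <;> (field_simp; try ring)
  · rw [hFeq]
    have h1 : HasFDerivAt (fun p : ℝ × ℝ => p.1)
        (ContinuousLinearMap.fst ℝ ℝ ℝ) (K * (1 - lam * u / rH), 0) := hasFDerivAt_fst
    have h2 : HasFDerivAt (fun p : ℝ × ℝ => p.2)
        (ContinuousLinearMap.snd ℝ ℝ ℝ) (K * (1 - lam * u / rH), 0) := hasFDerivAt_snd
    have hA : HasFDerivAt (fun p : ℝ × ℝ =>
        rH * (1 - (p.1 + p.2) / K) * p.1 - γ * p.1 * p.2 - lam * u * p.1)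
        ((lam * u - rH) • ContinuousLinearMap.fst ℝ ℝ ℝ +
          (-(rH * (K * (1 - lam * u / rH)) / K) - γ * (K * (1 - lam * u / rH))) •
            ContinuousLinearMap.snd ℝ ℝ ℝ) (K * (1 - lam * u / rH), 0) := by
      have e1 : (fun p : ℝ × ℝ =>
          rH * (1 - (p.1 + p.2) / K) * p.1 - γ * p.1 * p.2 - lam * u * p.1)
          = fun p : ℝ × ℝ =>
            rH * p.1 - rH / K * ((p.1 + p.2) * p.1) - γ * (p.1 * p.2) - lam * u * p.1 := by
        funext p; field_simp
      rw [e1]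
      have := (((h1.const_mul rH).sub (((h1.add h2).mul h1).const_mul (rH / K))).sub
        ((h1.mul h2).const_mul γ)).sub (h1.const_mul (lam * u))
      refine this.congr_fderiv ?_
      ext <;> simp <;> (try field_simp) <;> (try ring)
    have hB : HasFDerivAt (fun p : ℝ × ℝ =>
        rC * (1 - (p.1 + p.2) / K) * p.2 - mu * u * p.2)
        ((u * (rC * lam - rH * mu) / rH) • ContinuousLinearMap.snd ℝ ℝ ℝ)
        (K * (1 - lam * u / rH), 0) := by
      have e2 : (fun p : ℝ × ℝ =>
          rC * (1 - (p.1 + p.2) / K) * p.2 - mu * u * p.2)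
          = fun p : ℝ × ℝ =>
            rC * p.2 - rC / K * ((p.1 + p.2) * p.2) - mu * u * p.2 := by
        funext p; field_simp
      rw [e2]
      have := ((h2.const_mul rC).sub (((h1.add h2).mul h2).const_mul (rC / K))).sub
        (h2.const_mul (mu * u))
      refine this.congr_fderiv ?_
      ext <;> simp <;> (try field_simp) <;> (try ring)
    exact hA.prodMk hB
  · intro h
    have h1 : lam * u < rH := by
      have := (lt_div_iff₀ hlam).mp hu2
      linarith [mul_comm u lam]
    have h2 : rC * lam < rH * mu := by
      rw [div_lt_div_iff₀ hrH hlam] at h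
      linarith [mul_comm rC lam, mul_comm mu rH]
    constructor
    · linarith
    · apply div_neg_of_neg_of_pos _ hrH
      have : rC * lam - rH * mu < 0 := by linarith
      exact mul_neg_of_pos_of_neg hu this
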